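/- Let Γ : G → R be a partial projective representation with factor set σ. Then σ(g, g⁻¹) = σ(g⁻¹, g) for all g ∈ G. -/
import Mathlib


/-- Let `Γ : G → R` be a partial projective representation with factor
set `σ`.  Then `σ(g,g⁻¹) = σ(g⁻¹,g)` for all `g ∈ G`. -/
theorem partialProjRep_sigma_inv_symm
    {κ G R : Type*} [Field κ] [Group G] [Ring R] [Algebra κ R]
    (Γ : G → R) (σ : G → G → κ)
    (h1 : ∀ g h : G, σ g h = 0 → Γ g⁻¹ * Γ (g * h) = 0 ∧ Γ (g * h) * Γ h⁻¹ = 0)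
    (h2 : ∀ g h : G, Γ g⁻¹ * Γ g * Γ h = σ g h • (Γ g⁻¹ * Γ (g * h)))
    (h3 : ∀ g h : G, Γ g * Γ h * Γ h⁻¹ = σ g h • (Γ (g * h) * Γ h⁻¹))
    (h4 : Γ 1 = 1)
    (hfac : ∀ g h : G, Γ g * Γ h = 0 → σ g h = 0) :
    ∀ g : G, σ g g⁻¹ = σ g⁻¹ g := by
  intro g
  have e2 := h2 g g⁻¹
  have e3 := h3 g⁻¹ g
  rw [mul_inv_cancel, h4, mul_one] at e2
  rw [inv_mul_cancel, h4, one_mul] at e3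
  -- e2 : Γ g⁻¹ * Γ g * Γ g⁻¹ = σ g g⁻¹ • Γ g⁻¹
  -- e3 : Γ g⁻¹ * Γ g * Γ g⁻¹ = σ g⁻¹ g • Γ g⁻¹
  by_cases hz : Γ g⁻¹ = 0
  · have hA : Γ g * Γ g⁻¹ = 0 := by rw [hz, mul_zero]
    have hB : Γ g⁻¹ * Γ g = 0 := by rw [hz, zero_mul]
    rw [hfac g g⁻¹ hA, hfac g⁻¹ g hB]
  · have : σ g g⁻¹ • Γ g⁻¹ = σ g⁻¹ g • Γ g⁻¹ := by rw [← e2, ← e3]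
    have hsub : (σ g g⁻¹ - σ g⁻¹ g) • Γ g⁻¹ = 0 := by
      rw [sub_smul, this, sub_self]
    rcases smul_eq_zero.mp hsub with h | h
    · exact sub_eq_zero.mp h
    · exact absurd h hz
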